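/- In any complex normed space (X, ‖·‖), for all x, y ∈ X one has |Re(⟨x|y⟩)| ≤ ‖x‖·‖y‖ and |Im(⟨x|y⟩)| ≤ ‖x‖·‖y‖; consequently |⟨x|y⟩| ≤ √2·‖x‖·‖y‖. -/

import Mathlib

/-- The continuous product `⟨x|y⟩` in a complex normed space. -/
noncomputable def cprod {X : Type*} [NormedAddCommGroup X] [NormedSpace ℂ X] (x y : X) : ℂ :=
  open scoped Classical in
  if x = 0 ∨ y = 0 then 0
  else
    ((‖x‖ * ‖y‖ : ℝ) : ℂ) * (1 / 4 : ℂ) *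
      (((‖((‖x‖⁻¹ : ℝ) : ℂ) • x + ((‖y‖⁻¹ : ℝ) : ℂ) • y‖ ^ 2
          - ‖((‖x‖⁻¹ : ℝ) : ℂ) • x - ((‖y‖⁻¹ : ℝ) : ℂ) • y‖ ^ 2 : ℝ) : ℂ)
        + Complex.I *
          ((‖((‖x‖⁻¹ : ℝ) : ℂ) • x + Complex.I • (((‖y‖⁻¹ : ℝ) : ℂ) • y)‖ ^ 2
            - ‖((‖x‖⁻¹ : ℝ) : ℂ) • x - Complex.I • (((‖y‖⁻¹ : ℝ) : ℂ) • y)‖ ^ 2 : ℝ) : ℂ))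

lemma sq_diff_bound {a b : ℝ} (ha0 : 0 ≤ a) (ha : a ≤ 2) (hb0 : 0 ≤ b) (hb : b ≤ 2) :
    |a ^ 2 - b ^ 2| ≤ 4 := by
  rw [abs_le]
  constructor
  · nlinarith
  · nlinarith

lemma cabs_le {z : ℂ} {r : ℝ} (hr : 0 ≤ r) (h1 : |z.re| ≤ r) (h2 : |z.im| ≤ r) :
    ‖z‖ ≤ Real.sqrt 2 * r := by
  rw [Complex.norm_def, Complex.normSq_apply]
  have : z.re * z.re + z.im * z.im ≤ 2 * r ^ 2 := by
    have h1' := abs_le.mp h1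
    have h2' := abs_le.mp h2
    nlinarith
  calc Real.sqrt (z.re * z.re + z.im * z.im) ≤ Real.sqrt (2 * r ^ 2) :=
        Real.sqrt_le_sqrt this
    _ = Real.sqrt 2 * r := by
        rw [Real.sqrt_mul (by norm_num), Real.sqrt_sq hr]

/-- `|Re⟨x|y⟩| ≤ ‖x‖·‖y‖`, `|Im⟨x|y⟩| ≤ ‖x‖·‖y‖`, hence `|⟨x|y⟩| ≤ √2·‖x‖·‖y‖`. -/
theorem stmt1 {X : Type*} [NormedAddCommGroup X] [NormedSpace ℂ X] (x y : X) :
    |(cprod x y).re| ≤ ‖x‖ * ‖y‖ ∧ |(cprod x y).im| ≤ ‖x‖ * ‖y‖ ∧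
      ‖cprod x y‖ ≤ Real.sqrt 2 * (‖x‖ * ‖y‖) := by
  have hr : (0:ℝ) ≤ ‖x‖ * ‖y‖ := mul_nonneg (norm_nonneg _) (norm_nonneg _)
  by_cases h : x = 0 ∨ y = 0
  · simp only [cprod, if_pos h]
    refine ⟨by simpa using hr, by simpa using hr, ?_⟩
    simpa using mul_nonneg (Real.sqrt_nonneg 2) hr
  · push_neg at h
    obtain ⟨hx, hy⟩ := h
    set u : X := ((‖x‖⁻¹ : ℝ) : ℂ) • x with hu
    set v : X := ((‖y‖⁻¹ : ℝ) : ℂ) • y with hv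
    have hun : ‖u‖ = 1 := by
      rw [hu, norm_smul]
      simp [norm_ne_zero_iff.mpr hx, inv_mul_cancel₀ (norm_ne_zero_iff.mpr hx)]
    have hvn : ‖v‖ = 1 := by
      rw [hv, norm_smul]
      simp [inv_mul_cancel₀ (norm_ne_zero_iff.mpr hy)]
    have hIv : ‖Complex.I • v‖ = 1 := by
      rw [norm_smul, hvn]; simp
    have hA : |‖u + v‖ ^ 2 - ‖u - v‖ ^ 2| ≤ 4 := by
      apply sq_diff_bound (norm_nonneg _) ?_ (norm_nonneg _) ?_
      · calc ‖u + v‖ ≤ ‖u‖ + ‖v‖ := norm_add_le _ _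
          _ = 2 := by rw [hun, hvn]; norm_num
      · calc ‖u - v‖ ≤ ‖u‖ + ‖v‖ := norm_sub_le _ _
          _ = 2 := by rw [hun, hvn]; norm_num
    have hB : |‖u + Complex.I • v‖ ^ 2 - ‖u - Complex.I • v‖ ^ 2| ≤ 4 := by
      apply sq_diff_bound (norm_nonneg _) ?_ (norm_nonneg _) ?_
      · calc ‖u + Complex.I • v‖ ≤ ‖u‖ + ‖Complex.I • v‖ := norm_add_le _ _
          _ = 2 := by rw [hun, hIv]; norm_num
      · calc ‖u - Complex.I • v‖ ≤ ‖u‖ + ‖Complex.I • v‖ := norm_sub_le _ _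
          _ = 2 := by rw [hun, hIv]; norm_num
    have hc : cprod x y = ((‖x‖ * ‖y‖ : ℝ) : ℂ) * (1 / 4 : ℂ) *
        (((‖u + v‖ ^ 2 - ‖u - v‖ ^ 2 : ℝ) : ℂ)
          + Complex.I * ((‖u + Complex.I • v‖ ^ 2 - ‖u - Complex.I • v‖ ^ 2 : ℝ) : ℂ)) := by
      rw [cprod, if_neg (by tauto)]
    have hre : (cprod x y).re = (‖x‖ * ‖y‖) * (1 / 4) * (‖u + v‖ ^ 2 - ‖u - v‖ ^ 2) := by
      rw [hc]; simp [Complex.ext_iff, ← Complex.ofReal_pow]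
    have him : (cprod x y).im =
        (‖x‖ * ‖y‖) * (1 / 4) * (‖u + Complex.I • v‖ ^ 2 - ‖u - Complex.I • v‖ ^ 2) := by
      rw [hc]; simp [Complex.ext_iff, ← Complex.ofReal_pow]
    have h1 : |(cprod x y).re| ≤ ‖x‖ * ‖y‖ := by
      rw [hre, abs_mul, abs_of_nonneg (by positivity : (0:ℝ) ≤ ‖x‖ * ‖y‖ * (1/4))]
      calc ‖x‖ * ‖y‖ * (1/4) * |‖u + v‖ ^ 2 - ‖u - v‖ ^ 2| ≤ ‖x‖ * ‖y‖ * (1/4) * 4 := by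
            apply mul_le_mul_of_nonneg_left hA (by positivity)
        _ = ‖x‖ * ‖y‖ := by ring
    have h2 : |(cprod x y).im| ≤ ‖x‖ * ‖y‖ := by
      rw [him, abs_mul, abs_of_nonneg (by positivity : (0:ℝ) ≤ ‖x‖ * ‖y‖ * (1/4))]
      calc ‖x‖ * ‖y‖ * (1/4) * |‖u + Complex.I • v‖ ^ 2 - ‖u - Complex.I • v‖ ^ 2|
            ≤ ‖x‖ * ‖y‖ * (1/4) * 4 := by
            apply mul_le_mul_of_nonneg_left hB (by positivity)
        _ = ‖x‖ * ‖y‖ := by ring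
    exact ⟨h1, h2, cabs_le hr h1 h2⟩
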